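/- For every field F, every k ∈ ℕ and every nonempty finite set V: (1) if γ ∈ P(V^k) is graph-like, then IM_k^F∘γ is graph-like; (2) if k ≥ 2 and γ ∈ P(V^k) is graph-like and IM_k^F-stable, then pr_{k-1} γ is IM_{k-1}^F-stable. -/

import Mathlib

open Classical Matrix

noncomputable section

/-- `k`-tuples of elements of `V`. -/
abbrev Tup (V : Type) (k : ℕ) := Fin k → V

variable {V : Type}

/-- `v⟨i,x⟩` : the tuple obtained from `v` by substituting, for each `s`,
the entry of `v` in position `i s` by `x s`. -/
def substTup {k r : ℕ} (v : Tup V k) (i : Fin r → Fin k) (x : Tup V r) : Tup V k :=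
  fun j => if h : ∃ s, i s = j then x h.choose else v j

/-- `pr_j v = (v_{j 1}, …, v_{j r})`. -/
def prTup {k r : ℕ} (j : Fin r → Fin k) (v : Tup V k) : Tup V r := fun s => v (j s)

/-- `(w_1, …, w_r, w_r, …, w_r) : V^k`. -/
def extendTup [Nonempty V] {r : ℕ} (k : ℕ) (w : Tup V r) : Tup V k := fun i =>
  if h : (i : ℕ) < r then w ⟨i, h⟩
  else if h' : 0 < r then w ⟨r - 1, by omega⟩
  else Classical.arbitrary V

/-- The `r`-projection `pr_r γ` of a labelled partition (presented as a setoid) of `V^k`. -/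
def prPart [Nonempty V] {k : ℕ} (r : ℕ) (γ : Setoid (Tup V k)) : Setoid (Tup V r) where
  r w w' := γ.r (extendTup k w) (extendTup k w')
  iseqv := ⟨fun _ => γ.iseqv.refl _, fun h => γ.iseqv.symm h, fun h h' => γ.iseqv.trans h h'⟩

/-- `v^τ`, the tuple with `i`-th entry `v (τ⁻¹ i)`. -/
def permTup {k : ℕ} (τ : Equiv.Perm (Fin k)) (v : Tup V k) : Tup V k := fun i => v (τ.symm i)

/-- `γ ⪯ ρ` : the partition `ρ` refines the partition `γ`. -/
def Refines {A : Type*} (γ ρ : Setoid A) : Prop := ∀ u v : A, ρ.r u v → γ.r u v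

/-- `γ ≈ ρ` : the partitions mutually refine each other. -/
def PartEquiv {A : Type*} (γ ρ : Setoid A) : Prop := Refines γ ρ ∧ Refines ρ γ

/-- Invariance of a partition of `V^k` under `Sym(k)`. -/
def Invariant {k : ℕ} (γ : Setoid (Tup V k)) : Prop :=
  ∀ u v : Tup V k, γ.r u v → ∀ τ : Equiv.Perm (Fin k), γ.r (permTup τ u) (permTup τ v)

/-- `r`-consistency of a partition of `V^k`. -/
def Consistent [Nonempty V] {k : ℕ} (r : ℕ) (γ : Setoid (Tup V k)) : Prop :=
  ∀ u v : Tup V k, γ.r u v → ∀ j : Fin r → Fin k,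
    (prPart r γ).r (prTup j u) (prTup j v)

/-- Graph-like partitions of `V^k`. -/
def GraphLike [Nonempty V] {k : ℕ} (γ : Setoid (Tup V k)) : Prop :=
  Invariant γ ∧ (∀ r ≤ k, Consistent r γ) ∧
    ∀ u v : Tup V k, γ.r u v → ∀ i j : Fin k, u i = u j → v i = v j

/-- `{x ∈ V^r : γ(u⟨i,x⟩) = φ_i for all i ∈ [k]^(r)}`, where the colour tuple `φ` is
given by representatives. -/
def WLSet {k r : ℕ} (γ : Setoid (Tup V k)) (u : Tup V k)
    (φ : (Fin r → Fin k) → Tup V k) : Set (Tup V r) :=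
  {x | ∀ i : Fin r → Fin k, Function.Injective i → γ.r (substTup u i x) (φ i)}

/-- `{x ∈ V^r : γ(u⟨i,x⟩) = σ}`, where the colour `σ` is given by a representative `w`. -/
def CSet {k r : ℕ} (γ : Setoid (Tup V k)) (u : Tup V k)
    (i : Fin r → Fin k) (w : Tup V k) : Set (Tup V r) :=
  {x | γ.r (substTup u i x) w}

/-- `WL_{k,r}`-stability of a partition of `V^k`. -/
def WLStable {k : ℕ} (r : ℕ) (γ : Setoid (Tup V k)) : Prop :=
  r < k → ∀ u v : Tup V k, γ.r u v →
    ∀ φ : (Fin r → Fin k) → Tup V k, (WLSet γ u φ).ncard = (WLSet γ v φ).ncard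

/-- `C_{k,r}`-stability of a partition of `V^k`. -/
def CStable {k : ℕ} (r : ℕ) (γ : Setoid (Tup V k)) : Prop :=
  r < k → ∀ u v : Tup V k, γ.r u v →
    ∀ i : Fin r → Fin k, Function.Injective i → ∀ w : Tup V k,
      (CSet γ u i w).ncard = (CSet γ v i w).ncard

/-- The matrix `χ^{γ,v}_{i,σ}`, with the colour `σ` given by a representative `w`. -/
def chiMat (F : Type) [Field F] {k : ℕ} (γ : Setoid (Tup V k)) (v : Tup V k)
    (i : Fin 2 → Fin k) (w : Tup V k) : Matrix V V F :=
  Matrix.of fun x y => if γ.r (substTup v i ![x, y]) w then (1 : F) else 0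

/-- The matrix `χ^{γ,v}_φ`, with the colour tuple `φ` given by representatives. -/
def chiMatT (F : Type) [Field F] {k : ℕ} (γ : Setoid (Tup V k)) (v : Tup V k)
    (φ : (Fin 2 → Fin k) → Tup V k) : Matrix V V F :=
  Matrix.of fun x y =>
    if ∀ i : Fin 2 → Fin k, Function.Injective i → γ.r (substTup v i ![x, y]) (φ i)
    then (1 : F) else 0

/-- `IM_k^F`-stability of a partition of `V^k`. -/
def IMStable (F : Type) [Field F] [Fintype V] [DecidableEq V] {k : ℕ}
    (γ : Setoid (Tup V k)) : Prop :=
  2 < k → ∀ u v : Tup V k, γ.r u v →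
    ∀ i : Fin 2 → Fin k, Function.Injective i →
      ∃ S : (Matrix V V F)ˣ, ∀ w : Tup V k,
        (S : Matrix V V F) * chiMat F γ u i w * ((S⁻¹ : (Matrix V V F)ˣ) : Matrix V V F)
          = chiMat F γ v i w

/-- `IMt_k^F`-stability of a partition of `V^k`. -/
def IMtStable (F : Type) [Field F] [Fintype V] [DecidableEq V] {k : ℕ}
    (γ : Setoid (Tup V k)) : Prop :=
  2 < k → ∀ u v : Tup V k, γ.r u v →
    ∃ S : (Matrix V V F)ˣ, ∀ φ : (Fin 2 → Fin k) → Tup V k,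
      (S : Matrix V V F) * chiMatT F γ u φ * ((S⁻¹ : (Matrix V V F)ˣ) : Matrix V V F)
        = chiMatT F γ v φ

/-- The refinement operator `WL_{k,r}`. -/
def WLop {k : ℕ} (r : ℕ) (γ : Setoid (Tup V k)) : Setoid (Tup V k) :=
  if r < k then
    { r := fun u v => γ.r u v ∧ ∀ φ : (Fin r → Fin k) → Tup V k,
        (WLSet γ u φ).ncard = (WLSet γ v φ).ncard
      iseqv := by
        refine ⟨fun u => ⟨γ.iseqv.refl u, fun _ => rfl⟩, ?_, ?_⟩
        · rintro u v ⟨h1, h2⟩; exact ⟨γ.iseqv.symm h1, fun φ => (h2 φ).symm⟩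
        · rintro u v w ⟨h1, h2⟩ ⟨h1', h2'⟩
          exact ⟨γ.iseqv.trans h1 h1', fun φ => (h2 φ).trans (h2' φ)⟩ }
  else γ

/-- The refinement operator `C_{k,r}`. -/
def Cop {k : ℕ} (r : ℕ) (γ : Setoid (Tup V k)) : Setoid (Tup V k) :=
  if r < k then
    { r := fun u v => γ.r u v ∧ ∀ i : Fin r → Fin k, Function.Injective i →
        ∀ w : Tup V k, (CSet γ u i w).ncard = (CSet γ v i w).ncard
      iseqv := by
        refine ⟨fun u => ⟨γ.iseqv.refl u, fun _ _ _ => rfl⟩, ?_, ?_⟩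
        · rintro u v ⟨h1, h2⟩; exact ⟨γ.iseqv.symm h1, fun i hi w => (h2 i hi w).symm⟩
        · rintro u v w ⟨h1, h2⟩ ⟨h1', h2'⟩
          exact ⟨γ.iseqv.trans h1 h1', fun i hi x => (h2 i hi x).trans (h2' i hi x)⟩ }
  else γ


theorem conjRefl {M : Type*} [Monoid M] (A : M) :
    ((1 : Mˣ) : M) * A * (((1 : Mˣ)⁻¹ : Mˣ) : M) = A := by simp

theorem conjSymm {M : Type*} [Monoid M] (S : Mˣ) {A B : M}
    (h : (S : M) * A * ((S⁻¹ : Mˣ) : M) = B) :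
    ((S⁻¹ : Mˣ) : M) * B * (((S⁻¹)⁻¹ : Mˣ) : M) = A := by
  subst h
  rw [inv_inv]
  simp [mul_assoc, Units.inv_mul_cancel_left, Units.inv_mul]

theorem conjTrans {M : Type*} [Monoid M] (S T : Mˣ) {A B C : M}
    (h1 : (S : M) * A * ((S⁻¹ : Mˣ) : M) = B)
    (h2 : (T : M) * B * ((T⁻¹ : Mˣ) : M) = C) :
    ((T * S : Mˣ) : M) * A * (((T * S)⁻¹ : Mˣ) : M) = C := by
  subst h1; subst h2
  simp [Units.val_mul, _root_.mul_inv_rev, mul_assoc]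

/-- The refinement operator `IM_k^F`. -/
def IMop (F : Type) [Field F] [Fintype V] [DecidableEq V] {k : ℕ}
    (γ : Setoid (Tup V k)) : Setoid (Tup V k) :=
  if 2 < k then
    { r := fun u v => γ.r u v ∧ ∀ i : Fin 2 → Fin k, Function.Injective i →
        ∃ S : (Matrix V V F)ˣ, ∀ w : Tup V k,
          (S : Matrix V V F) * chiMat F γ u i w * ((S⁻¹ : (Matrix V V F)ˣ) : Matrix V V F)
            = chiMat F γ v i w
      iseqv := by
        refine ⟨fun u => ⟨γ.iseqv.refl u, fun i _ => ⟨1, fun w => conjRefl _⟩⟩, ?_, ?_⟩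
        · rintro u v ⟨h1, h2⟩
          refine ⟨γ.iseqv.symm h1, fun i hi => ?_⟩
          obtain ⟨S, hS⟩ := h2 i hi
          exact ⟨S⁻¹, fun w => conjSymm S (hS w)⟩
        · rintro u v w ⟨h1, h2⟩ ⟨h1', h2'⟩
          refine ⟨γ.iseqv.trans h1 h1', fun i hi => ?_⟩
          obtain ⟨S, hS⟩ := h2 i hi
          obtain ⟨T, hT⟩ := h2' i hi
          exact ⟨T * S, fun x => conjTrans S T (hS x) (hT x)⟩ }
  else γ

/-- The refinement operator `IMt_k^F`. -/
def IMtop (F : Type) [Field F] [Fintype V] [DecidableEq V] {k : ℕ}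
    (γ : Setoid (Tup V k)) : Setoid (Tup V k) :=
  if 2 < k then
    { r := fun u v => γ.r u v ∧
        ∃ S : (Matrix V V F)ˣ, ∀ φ : (Fin 2 → Fin k) → Tup V k,
          (S : Matrix V V F) * chiMatT F γ u φ * ((S⁻¹ : (Matrix V V F)ˣ) : Matrix V V F)
            = chiMatT F γ v φ
      iseqv := by
        refine ⟨fun u => ⟨γ.iseqv.refl u, ⟨1, fun φ => conjRefl _⟩⟩, ?_, ?_⟩
        · rintro u v ⟨h1, ⟨S, hS⟩⟩
          exact ⟨γ.iseqv.symm h1, ⟨S⁻¹, fun φ => conjSymm S (hS φ)⟩⟩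
        · rintro u v w ⟨h1, ⟨S, hS⟩⟩ ⟨h1', ⟨T, hT⟩⟩
          exact ⟨γ.iseqv.trans h1 h1', ⟨T * S, fun φ => conjTrans S T (hS φ) (hT φ)⟩⟩ }
  else γ

/-- Iterate a refinement operator `|V|^k` times, reaching its stable fixed point. -/
def stabilize [Fintype V] {k : ℕ} (R : Setoid (Tup V k) → Setoid (Tup V k))
    (γ : Setoid (Tup V k)) : Setoid (Tup V k) :=
  R^[Fintype.card V ^ k] γ

/-- A graph on `V` : a labelled partition of `V²` that is a rainbow. -/
def IsGraph (Γ : Setoid (Tup V 2)) : Prop :=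
  (∀ u x y : V, Γ.r ![u, u] ![x, y] → x = y) ∧
  (∀ u v u' v' : V, Γ.r ![u, v] ![u', v'] ↔ Γ.r ![v, u] ![v', u'])

/-- The atomic-type partition `α_{k,Γ}` of `V^k` determined by a graph `Γ`. -/
def atomicPart {k : ℕ} (Γ : Setoid (Tup V 2)) : Setoid (Tup V k) where
  r u v := ∀ i j : Fin k, i ≠ j → Γ.r ![u i, u j] ![v i, v j]
  iseqv := ⟨fun _ _ _ _ => Γ.iseqv.refl _, fun h i j hij => Γ.iseqv.symm (h i j hij),
    fun h h' i j hij => Γ.iseqv.trans (h i j hij) (h' i j hij)⟩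

/-- `WL̄_{k,r}(Γ)`. -/
def WLbarR [Nonempty V] [Fintype V] (k r : ℕ) (Γ : Setoid (Tup V 2)) : Setoid (Tup V 2) :=
  if k ≤ 1 then Γ else prPart 2 (stabilize (WLop (k := k) r) (atomicPart Γ))

/-- `C̄_{k,r}(Γ)`. -/
def CbarR [Nonempty V] [Fintype V] (k r : ℕ) (Γ : Setoid (Tup V 2)) : Setoid (Tup V 2) :=
  if k ≤ 1 then Γ else prPart 2 (stabilize (Cop (k := k) r) (atomicPart Γ))

/-- `WL̄_k(Γ) = WL̄_{k,1}(Γ)`. -/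
def WLbar [Nonempty V] [Fintype V] (k : ℕ) (Γ : Setoid (Tup V 2)) : Setoid (Tup V 2) :=
  WLbarR k 1 Γ

/-- `C̄_k(Γ) = C̄_{k,1}(Γ)`. -/
def Cbar [Nonempty V] [Fintype V] (k : ℕ) (Γ : Setoid (Tup V 2)) : Setoid (Tup V 2) :=
  CbarR k 1 Γ

/-- `IM̄_k^F(Γ)`. -/
def IMbar (F : Type) [Field F] [Nonempty V] [Fintype V] [DecidableEq V]
    (k : ℕ) (Γ : Setoid (Tup V 2)) : Setoid (Tup V 2) :=
  if k ≤ 1 then Γ else prPart 2 (stabilize (IMop (k := k) F) (atomicPart Γ))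

/-- `IMt̄_k^F(Γ)`. -/
def IMtbar (F : Type) [Field F] [Nonempty V] [Fintype V] [DecidableEq V]
    (k : ℕ) (Γ : Setoid (Tup V 2)) : Setoid (Tup V 2) :=
  if k ≤ 1 then Γ else prPart 2 (stabilize (IMtop (k := k) F) (atomicPart Γ))

/-- A nonempty finite set together with a graph on it. -/
structure FinGraph where
  V : Type
  [instFintype : Fintype V]
  [instDecEq : DecidableEq V]
  [instNonempty : Nonempty V]
  Γ : Setoid (Tup V 2)
  isGraph : IsGraph Γ

attribute [instance] FinGraph.instFintype FinGraph.instDecEq FinGraph.instNonempty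

/-! ### Auxiliary lemmas -/

section Aux

lemma extendTup_self [Nonempty V] {k : ℕ} (w : Tup V k) : extendTup k w = w := by
  funext i
  simp [extendTup, i.isLt]

lemma substTup_apply_mem {k r : ℕ} (u : Tup V k) {i : Fin r → Fin k}
    (hi : Function.Injective i) (x : Tup V r) (s : Fin r) :
    substTup u i x (i s) = x s := by
  have h : ∃ t, i t = i s := ⟨s, rfl⟩
  simp only [substTup, dif_pos h]
  exact congrArg x (hi h.choose_spec)

lemma substTup_apply_not_mem {k r : ℕ} (u : Tup V k) (i : Fin r → Fin k)
    (x : Tup V r) {j : Fin k} (hj : ∀ s, i s ≠ j) :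
    substTup u i x j = u j := by
  have h : ¬ ∃ t, i t = j := fun ⟨t, ht⟩ => hj t ht
  simp only [substTup, dif_neg h]

lemma inj_pair {α : Type*} {a b : α} (h : a ≠ b) : Function.Injective ![a, b] := by
  intro s t hst
  fin_cases s <;> fin_cases t <;> simp_all

/-- Graph-like partitions are preserved by composing tuples with arbitrary maps. -/
lemma comp_rel [Nonempty V] {k : ℕ} {γ : Setoid (Tup V k)} (hγ : GraphLike γ)
    (g : Fin k → Fin k) {z z' : Tup V k} (h : γ.r z z') :
    γ.r (z ∘ g) (z' ∘ g) := by
  have h1 : γ.r (extendTup k (z ∘ g)) (extendTup k (z' ∘ g)) := hγ.2.1 k le_rfl z z' h g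
  rwa [extendTup_self, extendTup_self] at h1

lemma rel_out_iff {k : ℕ} (γ : Setoid (Tup V k)) (z : Tup V k) (c : Quotient γ) :
    γ.r z (Quotient.out c) ↔ c = Quotient.mk γ z := by
  rw [Quotient.eq_mk_iff_out]
  exact ⟨fun h => γ.iseqv.symm h, fun h => γ.iseqv.symm h⟩

/-- Core lemma: if `S` conjugates all the `χ`-matrices of `u` at `i` to those of `v`,
then it also conjugates the corresponding matrices whose colours are pulled back
along composition with a map `g`. -/
lemma core (F : Type) [Field F] [Fintype V] [DecidableEq V] {k : ℕ}
    (γ : Setoid (Tup V k)) (g : Fin k → Fin k)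
    (Hg : ∀ (z z' : Tup V k), γ.r z z' → γ.r (z ∘ g) (z' ∘ g))
    (i : Fin 2 → Fin k) (u v : Tup V k) (S : (Matrix V V F)ˣ)
    (hS : ∀ w : Tup V k,
      (S : Matrix V V F) * chiMat F γ u i w * ((S⁻¹ : (Matrix V V F)ˣ) : Matrix V V F)
        = chiMat F γ v i w)
    (w₀ : Tup V k) :
    (S : Matrix V V F) *
        (Matrix.of fun x y => if γ.r (substTup u i ![x, y] ∘ g) w₀ then (1 : F) else 0) *
        ((S⁻¹ : (Matrix V V F)ˣ) : Matrix V V F)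
      = Matrix.of fun x y => if γ.r (substTup v i ![x, y] ∘ g) w₀ then (1 : F) else 0 := by
  haveI : DecidableEq (Quotient γ) := Classical.decEq _
  haveI : Fintype (Quotient γ) := @Quotient.fintype _ _ γ (fun _ _ => Classical.propDecidable _)
  set T : Finset (Quotient γ) :=
    Finset.univ.filter (fun c => γ.r (Quotient.out c ∘ g) w₀) with hT
  have hdec : ∀ z : Tup V k,
      (Matrix.of fun x y => if γ.r (substTup z i ![x, y] ∘ g) w₀ then (1 : F) else 0)
        = ∑ c ∈ T, chiMat F γ z i (Quotient.out c) := by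
    intro z
    ext x y
    simp only [Matrix.of_apply, Matrix.sum_apply]
    have h1 : ∀ c ∈ T, chiMat F γ z i (Quotient.out c) x y
        = if c = Quotient.mk γ (substTup z i ![x, y]) then (1 : F) else 0 := by
      intro c _
      simp only [chiMat, Matrix.of_apply]
      exact if_congr (rel_out_iff γ _ c) rfl rfl
    rw [Finset.sum_congr rfl h1, Finset.sum_ite_eq' T _ (fun _ => (1 : F))]
    apply if_congr _ rfl rfl
    rw [hT]
    simp only [Finset.mem_filter, Finset.mem_univ, true_and]
    have hout : γ.r (Quotient.out (Quotient.mk γ (substTup z i ![x, y])))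
        (substTup z i ![x, y]) := Quotient.mk_out _
    have hout' : γ.r (Quotient.out (Quotient.mk γ (substTup z i ![x, y])) ∘ g)
        (substTup z i ![x, y] ∘ g) := Hg _ _ hout
    have hout'' : γ.r (substTup z i ![x, y] ∘ g)
        (Quotient.out (Quotient.mk γ (substTup z i ![x, y])) ∘ g) := γ.iseqv.symm hout'
    exact ⟨fun hh => γ.iseqv.trans hout' hh, fun hh => γ.iseqv.trans hout'' hh⟩
  rw [hdec u, hdec v, Finset.mul_sum, Finset.sum_mul]
  exact Finset.sum_congr rfl fun c _ => hS _

/-- Substitution into a composed tuple is a composed substitution at a fresh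
injective pair of indices. -/
lemma tuple1 {k : ℕ} (hk : 2 ≤ k) (e : Fin k → Fin k) (i : Fin 2 → Fin k)
    (hi : Function.Injective i) :
    ∃ i' : Fin 2 → Fin k, Function.Injective i' ∧ ∃ g : Fin k → Fin k,
      ∀ (u : Tup V k) (x y : V),
        substTup (u ∘ e) i ![x, y] = substTup u i' ![x, y] ∘ g := by
  classical
  have h01 : i 0 ≠ i 1 := fun h => absurd (hi h) (by decide)
  set B : Finset (Fin k) := (Finset.univ \ {i 0, i 1}).image e with hB
  have hBcard : B.card ≤ k - 2 := by
    refine le_trans Finset.card_image_le ?_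
    rw [Finset.card_sdiff_of_subset (Finset.subset_univ _), Finset.card_univ, Fintype.card_fin,
      Finset.card_pair h01]
  have hA : 1 < (Finset.univ \ B).card := by
    have h1 : (Finset.univ \ B).card = k - B.card := by
      rw [Finset.card_sdiff_of_subset (Finset.subset_univ _), Finset.card_univ, Fintype.card_fin]
    omega
  obtain ⟨p, hp, q, hq, hpq⟩ := Finset.one_lt_card.mp hA
  have hpB : p ∉ B := (Finset.mem_sdiff.mp hp).2
  have hqB : q ∉ B := (Finset.mem_sdiff.mp hq).2
  refine ⟨![p, q], inj_pair hpq,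
    fun t => if t = i 0 then p else if t = i 1 then q else e t, ?_⟩
  intro u x y
  funext t
  simp only [Function.comp_apply]
  by_cases h0 : t = i 0
  · subst h0
    rw [if_pos rfl]
    rw [substTup_apply_mem (u ∘ e) hi ![x, y] 0]
    exact (substTup_apply_mem u (inj_pair hpq) ![x, y] 0).symm
  · by_cases h1 : t = i 1
    · subst h1
      rw [if_neg h0, if_pos rfl]
      rw [substTup_apply_mem (u ∘ e) hi ![x, y] 1]
      exact (substTup_apply_mem u (inj_pair hpq) ![x, y] 1).symm
    · rw [if_neg h0, if_neg h1]
      have hj : ∀ s : Fin 2, i s ≠ t := by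
        intro s; fin_cases s
        · exact fun hh => h0 hh.symm
        · exact fun hh => h1 hh.symm
      rw [substTup_apply_not_mem (u ∘ e) i ![x, y] hj]
      have hetB : e t ∈ B := by
        rw [hB]
        refine Finset.mem_image.mpr ⟨t, ?_, rfl⟩
        simp [h0, h1]
      have hj' : ∀ s : Fin 2, (![p, q] : Fin 2 → Fin k) s ≠ e t := by
        intro s
        fin_cases s
        · show p ≠ e t
          intro hh
          exact hpB (by rw [hh]; exact hetB)
        · show q ≠ e t
          intro hh
          exact hqB (by rw [hh]; exact hetB)
      rw [substTup_apply_not_mem u ![p, q] ![x, y] hj']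
      rfl

/-- Extension of a substituted `(k-1)`-tuple is a composed substitution of the
extended tuple. -/
lemma tuple2 [Nonempty V] {k : ℕ} (hk : 2 ≤ k) (i : Fin 2 → Fin (k - 1))
    (hi : Function.Injective i) :
    ∃ i' : Fin 2 → Fin k, Function.Injective i' ∧ ∃ g : Fin k → Fin k,
      ∀ (w : Tup V (k - 1)) (x y : V),
        extendTup k (substTup w i ![x, y]) = substTup (extendTup k w) i' ![x, y] ∘ g := by
  have hm : 0 < k - 1 := by omega
  have hkk : k - 1 ≤ k := by omega
  set i' : Fin 2 → Fin k := fun s => Fin.castLE hkk (i s) with hi'def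
  have hi' : Function.Injective i' := fun s t h => hi (Fin.castLE_injective hkk h)
  refine ⟨i', hi', fun t => if (t : ℕ) < k - 1 then t else ⟨k - 2, by omega⟩, ?_⟩
  intro w x y
  funext t
  simp only [Function.comp_apply]
  by_cases ht : (t : ℕ) < k - 1
  · rw [if_pos ht]
    by_cases hs : ∃ s, i s = ⟨(t : ℕ), ht⟩
    · obtain ⟨s, hs⟩ := hs
      have hL : extendTup k (substTup w i ![x, y]) t = ![x, y] s := by
        have hsub : substTup w i ![x, y] ⟨(t : ℕ), ht⟩ = ![x, y] s := by
          conv_lhs => rw [← hs]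
          exact substTup_apply_mem w hi ![x, y] s
        simp only [extendTup, dif_pos ht]
        exact hsub
      have hti' : t = i' s := by
        rw [hi'def]
        apply Fin.ext
        simp [hs]
      rw [hL, hti']
      exact (substTup_apply_mem (extendTup k w) hi' ![x, y] s).symm
    · push_neg at hs
      have hL : extendTup k (substTup w i ![x, y]) t = w ⟨(t : ℕ), ht⟩ := by
        simp only [extendTup, dif_pos ht]
        exact substTup_apply_not_mem w i ![x, y] hs
      have hs' : ∀ s : Fin 2, i' s ≠ t := by
        intro s hh
        apply hs s
        apply Fin.ext
        rw [hi'def] at hh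
        have hv := congrArg Fin.val hh
        simpa using hv
      rw [hL, substTup_apply_not_mem (extendTup k w) i' ![x, y] hs']
      simp only [extendTup, dif_pos ht]
  · rw [if_neg ht]
    simp only [extendTup, dif_neg ht, dif_pos hm]
    by_cases hs : ∃ s, i s = ⟨k - 1 - 1, by omega⟩
    · obtain ⟨s, hs⟩ := hs
      have hL : substTup w i ![x, y] ⟨k - 1 - 1, by omega⟩ = ![x, y] s := by
        conv_lhs => rw [← hs]
        exact substTup_apply_mem w hi ![x, y] s
      have hgi : (⟨k - 2, by omega⟩ : Fin k) = i' s := by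
        rw [hi'def]
        apply Fin.ext
        have hv := congrArg Fin.val hs
        simp at hv ⊢
        omega
      rw [hL, hgi]
      exact (substTup_apply_mem (extendTup k w) hi' ![x, y] s).symm
    · push_neg at hs
      have hL : substTup w i ![x, y] ⟨k - 1 - 1, by omega⟩ = w ⟨k - 1 - 1, by omega⟩ :=
        substTup_apply_not_mem w i ![x, y] hs
      have hs' : ∀ s : Fin 2, i' s ≠ (⟨k - 2, by omega⟩ : Fin k) := by
        intro s hh
        apply hs s
        apply Fin.ext
        rw [hi'def] at hh
        have hv := congrArg Fin.val hh
        simp at hv ⊢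
        omega
      rw [hL, substTup_apply_not_mem (extendTup k w) i' ![x, y] hs']
      have hk2 : k - 2 < k - 1 := by omega
      simp only [extendTup, dif_pos hk2]
      congr 1

lemma IMop_rel (F : Type) [Field F] [Fintype V] [DecidableEq V] {k : ℕ} (hk : 2 < k)
    (γ : Setoid (Tup V k)) (u v : Tup V k) :
    (IMop F γ).r u v ↔ (γ.r u v ∧ ∀ i : Fin 2 → Fin k, Function.Injective i →
      ∃ S : (Matrix V V F)ˣ, ∀ w : Tup V k,
        (S : Matrix V V F) * chiMat F γ u i w * ((S⁻¹ : (Matrix V V F)ˣ) : Matrix V V F)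
          = chiMat F γ v i w) := by
  unfold IMop
  rw [if_pos hk]
  exact Iff.rfl

lemma IMop_eq (F : Type) [Field F] [Fintype V] [DecidableEq V] {k : ℕ} (hk : ¬ 2 < k)
    (γ : Setoid (Tup V k)) : IMop F γ = γ := by
  unfold IMop
  rw [if_neg hk]

/-- Key lemma: the matrix-conjugation condition is preserved by composing both
tuples with an arbitrary map `e`. -/
lemma key (F : Type) [Field F] [Fintype V] [DecidableEq V] {k : ℕ} (hk : 2 < k)
    (γ : Setoid (Tup V k))
    (Hg : ∀ (g : Fin k → Fin k) (z z' : Tup V k), γ.r z z' → γ.r (z ∘ g) (z' ∘ g))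
    (u v : Tup V k)
    (h2 : ∀ i : Fin 2 → Fin k, Function.Injective i →
      ∃ S : (Matrix V V F)ˣ, ∀ w : Tup V k,
        (S : Matrix V V F) * chiMat F γ u i w * ((S⁻¹ : (Matrix V V F)ˣ) : Matrix V V F)
          = chiMat F γ v i w)
    (e : Fin k → Fin k) :
    ∀ i : Fin 2 → Fin k, Function.Injective i →
      ∃ S : (Matrix V V F)ˣ, ∀ w : Tup V k,
        (S : Matrix V V F) * chiMat F γ (u ∘ e) i w * ((S⁻¹ : (Matrix V V F)ˣ) : Matrix V V F)
          = chiMat F γ (v ∘ e) i w := by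
  intro i hi
  obtain ⟨i', hi', g, hg⟩ := tuple1 (V := V) (by omega : 2 ≤ k) e i hi
  obtain ⟨S, hS⟩ := h2 i' hi'
  refine ⟨S, fun w => ?_⟩
  have hrw : ∀ z : Tup V k, chiMat F γ (z ∘ e) i w
      = Matrix.of fun x y => if γ.r (substTup z i' ![x, y] ∘ g) w then (1 : F) else 0 := by
    intro z
    ext x y
    simp only [chiMat, Matrix.of_apply]
    rw [← hg z x y]
  rw [hrw u, hrw v]
  exact core F γ g (Hg g) i' u v S hS w

end Aux

/-- `IM_k^F` is a graph-like refinement operator, and projections of graph-like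
fixed points are fixed points. -/
theorem im_refinement_procedure (F : Type) [Field F] (V : Type) [Fintype V]
    [DecidableEq V] [Nonempty V] (k : ℕ) :
    (∀ γ : Setoid (Tup V k), GraphLike γ → GraphLike (IMop F γ)) ∧
    (∀ γ : Setoid (Tup V k), 2 ≤ k → GraphLike γ → PartEquiv γ (IMop F γ) →
      PartEquiv (prPart (k - 1) γ) (IMop F (prPart (k - 1) γ))) := by
  constructor
  · -- (1) IM preserves graph-likeness
    intro γ hγ
    by_cases hk : 2 < k
    · have Hg : ∀ (g : Fin k → Fin k) (z z' : Tup V k), γ.r z z' → γ.r (z ∘ g) (z' ∘ g) :=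
        fun g z z' h => comp_rel hγ g h
    -- three properties
      refine ⟨?_, ?_, ?_⟩
      · -- invariance
        intro u v huv τ
        rw [IMop_rel F hk] at huv ⊢
        obtain ⟨h1, h2⟩ := huv
        have hperm : ∀ z : Tup V k, permTup τ z = z ∘ ⇑τ.symm := fun z => rfl
        rw [hperm u, hperm v]
        exact ⟨Hg _ _ _ h1, key F hk γ Hg u v h2 ⇑τ.symm⟩
      · -- consistency
        intro r hr u v huv j
        rw [IMop_rel F hk] at huv
        obtain ⟨h1, h2⟩ := huv
        show (IMop F γ).r (extendTup k (prTup j u)) (extendTup k (prTup j v))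
        rcases r with _ | s
        · have hEq : extendTup k (prTup j u) = extendTup k (prTup j v) := by
            funext t
            simp [extendTup]
          rw [hEq]
        · set e : Fin k → Fin k := fun t => j ⟨min (t : ℕ) s, by omega⟩ with he
          have heu : ∀ z : Tup V k, extendTup k (prTup j z) = z ∘ e := by
            intro z
            funext t
            simp only [extendTup, prTup, Function.comp_apply, he]
            by_cases ht : (t : ℕ) < s + 1
            · rw [dif_pos ht]
              congr 2
              apply Fin.ext
              simp
              omega
            · rw [dif_neg ht, dif_pos (Nat.succ_pos s)]
              congr 2
              apply Fin.ext
              simp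
              omega
          rw [heu u, heu v, IMop_rel F hk]
          exact ⟨Hg e _ _ h1, key F hk γ Hg u v h2 e⟩
      · -- equality type
        intro u v huv a b hab
        rw [IMop_rel F hk] at huv
        exact hγ.2.2 u v huv.1 a b hab
    · rw [IMop_eq F hk]
      exact hγ
  · -- (2) projections of stable graph-like partitions are stable
    intro γ hk2 hγ hstab
    by_cases hm : 2 < k - 1
    · have hk : 2 < k := by omega
      constructor
      · intro w w' h
        rw [IMop_rel F hm] at h
        exact h.1
      · intro w w' h
        rw [IMop_rel F hm]
        refine ⟨h, ?_⟩
        intro i hi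
        obtain ⟨i', hi', g, hg⟩ := tuple2 (V := V) (by omega : 2 ≤ k) i hi
        have hγuv : γ.r (extendTup k w) (extendTup k w') := h
        have hIM := hstab.2 _ _ hγuv
        rw [IMop_rel F hk] at hIM
        obtain ⟨S, hS⟩ := hIM.2 i' hi'
        refine ⟨S, fun c => ?_⟩
        have hrw : ∀ z : Tup V (k - 1), chiMat F (prPart (k - 1) γ) z i c
            = Matrix.of fun x y =>
                if γ.r (substTup (extendTup k z) i' ![x, y] ∘ g) (extendTup k c)
                then (1 : F) else 0 := by
          intro z
          ext x y
          simp only [chiMat, Matrix.of_apply]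
          rw [← hg z x y]
          rfl
        rw [hrw w, hrw w']
        exact core F γ g (fun z z' hzz' => comp_rel hγ g hzz') i'
          (extendTup k w) (extendTup k w') S hS (extendTup k c)
    · rw [IMop_eq F hm]
      exact ⟨fun _ _ h => h, fun _ _ h => h⟩

end
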